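/- Let N ≥ 2 and let y₁, …, y_{N−1} be real numbers with 0 ≤ y_i ≤ 1 for all i. Set S := 1 + ∑_{i=1}^{N−1} y_i and m := ⌈S⌉, and suppose m ≥ 3. Then ∑_{k=1}^{N−1} y_k / ((N − k)·(1 + ∑_{i=1}^{k} y_i)) ≤ (4·H_{m−2} + 1)/(m − 1), where H_j = ∑_{l=1}^{j} 1/l is the j-th harmonic number. -/

import Mathlib

open Finset

private lemma telescope_Icc (g : ℕ → ℝ) (n : ℕ) :
    ∑ k ∈ Icc 1 n, (g k - g (k - 1)) = g n - g 0 := by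
  induction n with
  | zero => simp
  | succ n ih =>
    rw [Finset.sum_Icc_succ_top (by omega : 1 ≤ n + 1), ih]
    simp only [Nat.add_sub_cancel]
    ring

private lemma harmonic_lower (n : ℕ) (hn : 1 ≤ n) :
    1 + (Real.log (n + 1) - Real.log 2) ≤ ∑ l ∈ Icc 1 n, (1:ℝ)/l := by
  induction n with
  | zero => omega
  | succ n ih =>
    rcases Nat.lt_or_ge n 1 with h | h
    · interval_cases n
      norm_num
    · have hstep : Real.log ((n:ℝ) + 2) - Real.log ((n:ℝ) + 1) ≤ 1 / ((n:ℝ) + 1) := by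
        have hpos : (0:ℝ) < ((n:ℝ) + 2) / ((n:ℝ) + 1) := by positivity
        have hl := Real.log_le_sub_one_of_pos hpos
        rw [Real.log_div (by positivity) (by positivity)] at hl
        have h1 : ((n:ℝ)+2)/((n:ℝ)+1) - 1 = 1/((n:ℝ)+1) := by
          field_simp
          norm_num
        linarith
      rw [Finset.sum_Icc_succ_top (by omega : 1 ≤ n + 1)]
      have h2 := ih h
      push_cast
      have hcast : ((n:ℝ) + 1 + 1) = (n:ℝ) + 2 := by ring
      rw [hcast]
      push_cast at h2
      linarith

private lemma div_mono_denom (w d e : ℝ) (hw : 0 ≤ w) (he : 0 < e) (hde : e ≤ d) :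
    w / d ≤ w / e := by
  rw [div_le_div_iff₀ (lt_of_lt_of_le he hde) he]
  exact mul_le_mul_of_nonneg_left hde hw

private noncomputable def Gfun (M x : ℝ) : ℝ :=
  (1 / M) * (Real.log x - Real.log (max (M - 1 - x) (1 / 2)))
    + (1 / (M - 3 / 2)) * max x (M - 5 / 2)

private lemma pointwise_bound (M a b D w : ℝ)
    (hM : 3 ≤ M) (ha : 1 ≤ a) (hab : a ≤ b) (hbM : b ≤ M)
    (hw : w = b - a) (hw1 : b - a ≤ 1)
    (hD1 : 1 ≤ D) (hD2 : M - b < D) :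
    w / (D * b) ≤ Gfun M b - Gfun M a := by
  have hbpos : (0:ℝ) < b := by linarith
  have hapos : (0:ℝ) < a := by linarith
  have hw0 : 0 ≤ w := by linarith
  have hc : (0:ℝ) < M - 3/2 := by linarith
  unfold Gfun
  by_cases hcase : b ≤ M - 3/2
  · -- Case A
    have hMb : (0:ℝ) < M - b := by linarith
    have hmax_b : max (M - 1 - b) (1/2 : ℝ) = M - 1 - b := max_eq_left (by linarith)
    have hmax_a : max (M - 1 - a) (1/2 : ℝ) = M - 1 - a := max_eq_left (by linarith)
    rw [hmax_b, hmax_a]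
    have hterm : w / (D * b) ≤ w / ((M - b) * b) :=
      div_mono_denom _ _ _ hw0 (mul_pos hMb hbpos)
        (mul_le_mul_of_nonneg_right (le_of_lt hD2) (le_of_lt hbpos))
    have hid : w / ((M - b) * b) = (1/M) * (w/b + w/(M - b)) := by
      field_simp
      ring
    have hp1 : w / b ≤ Real.log b - Real.log a := by
      have hlog := Real.log_le_sub_one_of_pos (show (0:ℝ) < a/b by positivity)
      rw [Real.log_div (ne_of_gt hapos) (ne_of_gt hbpos)] at hlog
      have he : w / b = 1 - a/b := by rw [hw]; field_simp
      rw [he]; linarith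
    have hp2 : w / (M - b) ≤ Real.log (M - 1 - a) - Real.log (M - 1 - b) := by
      have hu : (0:ℝ) < M - 1 - a := by linarith
      have hv : (0:ℝ) < M - 1 - b := by linarith
      have hlog := Real.log_le_sub_one_of_pos (show (0:ℝ) < (M-1-b)/(M-1-a) by positivity)
      rw [Real.log_div (ne_of_gt hv) (ne_of_gt hu)] at hlog
      have e1 : 1 - (M-1-b)/(M-1-a) = w / (M-1-a) := by rw [hw]; field_simp; ring
      have e2 : w / (M - b) ≤ w / (M-1-a) :=
        div_mono_denom _ _ _ hw0 hu (by linarith)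
      linarith
    have hp3 : max a (M - 5/2) ≤ max b (M - 5/2) := max_le_max hab le_rfl
    have hMpos : (0:ℝ) < M := by linarith
    have hfinal : (1/M) * (w/b + w/(M - b)) ≤
        (1/M) * ((Real.log b - Real.log a) + (Real.log (M-1-a) - Real.log (M-1-b))) := by
      apply mul_le_mul_of_nonneg_left _ (by positivity)
      linarith
    have hnn : 0 ≤ (1/(M - 3/2)) * (max b (M - 5/2) - max a (M - 5/2)) := by
      apply mul_nonneg (by positivity)
      linarith
    calc w / (D * b) ≤ w / ((M - b) * b) := hterm
      _ = (1/M) * (w/b + w/(M - b)) := hid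
      _ ≤ (1/M) * ((Real.log b - Real.log a) + (Real.log (M-1-a) - Real.log (M-1-b))) := hfinal
      _ ≤ _ := by linarith [hnn]
  · -- Case B
    push_neg at hcase
    have h1 : w / (D * b) ≤ w / (1 * b) :=
      div_mono_denom _ _ _ hw0 (by linarith [one_mul b])
        (mul_le_mul_of_nonneg_right hD1 (le_of_lt hbpos))
    have h2 : w / (1 * b) ≤ w / (M - 3/2) := by
      rw [one_mul]
      exact div_mono_denom _ _ _ hw0 hc (by linarith)
    have hmaxb : max b (M - 5/2) = b := max_eq_left (by linarith)
    have hmaxa : max a (M - 5/2) = a := max_eq_left (by linarith)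
    have hf1 : Real.log a ≤ Real.log b := Real.log_le_log hapos hab
    have hf2 : Real.log (max (M - 1 - b) (1/2:ℝ)) ≤ Real.log (max (M - 1 - a) (1/2:ℝ)) := by
      apply Real.log_le_log (by positivity)
      exact max_le_max (by linarith) le_rfl
    have hMpos : (0:ℝ) < M := by linarith
    have hnn1 : 0 ≤ (1/M) * ((Real.log b - Real.log (max (M - 1 - b) (1/2:ℝ)))
        - (Real.log a - Real.log (max (M - 1 - a) (1/2:ℝ)))) := by
      apply mul_nonneg (by positivity)
      linarith
    have heq : (1/(M - 3/2)) * max b (M - 5/2) - (1/(M - 3/2)) * max a (M - 5/2)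
        = w / (M - 3/2) := by
      rw [hmaxb, hmaxa, hw]
      field_simp
    linarith [h1, h2, hnn1, heq]

private lemma G_diff_bound (M S : ℝ) (hM : 3 ≤ M) (hS1 : 1 ≤ S) (hSM : S ≤ M) :
    Gfun M S - Gfun M 1 ≤ (1/M) * (Real.log M + (Real.log 2 + Real.log (M - 2)))
      + (1/(M - 3/2)) * (5/2) := by
  unfold Gfun
  have hMpos : (0:ℝ) < M := by linarith
  have hc : (0:ℝ) < M - 3/2 := by linarith
  have h1 : Real.log S ≤ Real.log M := Real.log_le_log (by linarith) hSM
  have h2 : Real.log (1/2 : ℝ) ≤ Real.log (max (M - 1 - S) (1/2:ℝ)) :=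
    Real.log_le_log (by norm_num) (le_max_right _ _)
  have h3 : Real.log (1/2 : ℝ) = - Real.log 2 := by
    rw [one_div, Real.log_inv]
  have h4 : max (M - 1 - 1) (1/2 : ℝ) = M - 2 := by
    rw [max_eq_left (by linarith)]
    ring
  have h5 : Real.log (1:ℝ) = 0 := Real.log_one
  rw [h4, h5]
  have hA : Real.log S - Real.log (max (M - 1 - S) (1/2:ℝ)) - (0 - Real.log (M - 2))
      ≤ Real.log M + (Real.log 2 + Real.log (M - 2)) := by linarith
  have hB : max S (M - 5/2) - max 1 (M - 5/2) ≤ 5/2 := by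
    have hb1 : max S (M - 5/2) ≤ M := max_le hSM (by linarith)
    have hb2 : M - 5/2 ≤ max 1 (M - 5/2) := le_max_right _ _
    linarith
  have c1 : (1/M) * (Real.log S - Real.log (max (M - 1 - S) (1/2:ℝ)) - (0 - Real.log (M - 2)))
      ≤ (1/M) * (Real.log M + (Real.log 2 + Real.log (M - 2))) :=
    mul_le_mul_of_nonneg_left hA (by positivity)
  have c2 : (1/(M - 3/2)) * (max S (M - 5/2) - max 1 (M - 5/2)) ≤ (1/(M - 3/2)) * (5/2) :=
    mul_le_mul_of_nonneg_left hB (by positivity)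
  linarith [c1, c2]

private lemma log_facts : Real.log 2 ≤ 1 ∧ 3 * Real.log 2 ≤ 2 * Real.log 3 ∧ 0 ≤ Real.log 2 := by
  refine ⟨?_, ?_, Real.log_nonneg (by norm_num)⟩
  · have := Real.log_le_sub_one_of_pos (show (0:ℝ) < 2 by norm_num)
    linarith
  · have h89 : Real.log 8 ≤ Real.log 9 := Real.log_le_log (by norm_num) (by norm_num)
    have h8 : Real.log (8:ℝ) = 3 * Real.log 2 := by
      rw [show (8:ℝ) = 2^3 by norm_num, Real.log_pow]
      push_cast; ring
    have h9 : Real.log (9:ℝ) = 2 * Real.log 3 := by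
      rw [show (9:ℝ) = 3^2 by norm_num, Real.log_pow]
      push_cast; ring
    linarith

private lemma final_numeric (m : ℕ) (hm3 : 3 ≤ m) :
    (1/(m:ℝ)) * (Real.log m + (Real.log 2 + Real.log ((m:ℝ) - 2)))
      + (1/((m:ℝ) - 3/2)) * (5/2)
      ≤ (4 * ∑ l ∈ Icc 1 (m - 2), (1:ℝ)/(l:ℝ) + 1) / ((m:ℝ) - 1) := by
  obtain ⟨hl2a, hl2b, hl2c⟩ := log_facts
  rcases eq_or_lt_of_le hm3 with h3 | h4
  · -- m = 3
    subst h3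
    have hs : ∑ l ∈ Icc 1 ((3:ℕ) - 2), (1:ℝ)/(l:ℝ) = 1 := by
      norm_num
    rw [hs]
    have hlog34 : Real.log 3 ≤ 2 * Real.log 2 := by
      have h34 := Real.log_le_log (show (0:ℝ) < 3 by norm_num) (show (3:ℝ) ≤ 4 by norm_num)
      have h4 : Real.log (4:ℝ) = 2 * Real.log 2 := by
        rw [show (4:ℝ) = 2^2 by norm_num, Real.log_pow]; push_cast; ring
      linarith
    have hl1 : Real.log ((3:ℕ):ℝ) = Real.log 3 := by norm_num
    have hl2 : Real.log (((3:ℕ):ℝ) - 2) = 0 := by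
      norm_num
    have hd9 := Real.log_two_lt_d9
    rw [hl1, hl2]
    norm_num
    linarith
  · -- m ≥ 4
    have hm4 : 4 ≤ m := h4
    have hM4 : (4:ℝ) ≤ (m:ℝ) := by exact_mod_cast hm4
    set M := (m:ℝ) with hMdef
    have hMpos : (0:ℝ) < M := by linarith
    have hc : (0:ℝ) < M - 3/2 := by linarith
    have hm1 : (0:ℝ) < M - 1 := by linarith
    -- harmonic lower bound
    have hcast : ((m - 2 : ℕ) : ℝ) = M - 2 := by
      have : ((m - 2 : ℕ) : ℝ) = (m:ℝ) - 2 := by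
        push_cast [Nat.cast_sub (show 2 ≤ m by omega)]
        ring
      exact this
    have hH := harmonic_lower (m - 2) (by omega)
    rw [hcast] at hH
    have hH' : 1 + (Real.log (M - 1) - Real.log 2) ≤ ∑ l ∈ Icc 1 (m-2), (1:ℝ)/(l:ℝ) := by
      have : (M - 2) + 1 = M - 1 := by ring
      rwa [this] at hH
    set H := ∑ l ∈ Icc 1 (m-2), (1:ℝ)/(l:ℝ) with hHdef
    rw [le_div_iff₀ hm1]
    -- bounds on log pieces
    have hlm2 : (0:ℝ) ≤ Real.log (M - 2) := Real.log_nonneg (by linarith)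
    have hlm : (0:ℝ) ≤ Real.log M := Real.log_nonneg (by linarith)
    have hlm1 : (0:ℝ) ≤ Real.log (M - 1) := Real.log_nonneg (by linarith)
    have hsum2 : Real.log M + Real.log (M - 2) ≤ 2 * Real.log (M - 1) := by
      have e1 : Real.log M + Real.log (M - 2) = Real.log (M * (M - 2)) :=
        (Real.log_mul (by linarith) (by linarith)).symm
      have e2 : Real.log (M * (M - 2)) ≤ Real.log ((M - 1)^2) :=
        Real.log_le_log (by nlinarith) (by nlinarith)
      have e3 : Real.log ((M - 1)^2) = 2 * Real.log (M - 1) := by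
        rw [Real.log_pow]; push_cast; ring
      linarith
    have hlog3 : Real.log 3 ≤ Real.log (M - 1) := Real.log_le_log (by norm_num) (by linarith)
    -- fraction bounds
    have e1 : (1/M) * (Real.log M + (Real.log 2 + Real.log (M - 2))) * (M - 1)
        = (Real.log M + (Real.log 2 + Real.log (M - 2))) * ((M - 1)/M) := by ring
    have e2 : (M - 1)/M ≤ 1 := by rw [div_le_one hMpos]; linarith
    have e3 : (1/M) * (Real.log M + (Real.log 2 + Real.log (M - 2))) * (M - 1)
        ≤ Real.log M + (Real.log 2 + Real.log (M - 2)) := by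
      rw [e1]
      have hXnn : (0:ℝ) ≤ Real.log M + (Real.log 2 + Real.log (M - 2)) := by linarith
      calc (Real.log M + (Real.log 2 + Real.log (M - 2))) * ((M - 1)/M)
          ≤ (Real.log M + (Real.log 2 + Real.log (M - 2))) * 1 :=
            mul_le_mul_of_nonneg_left e2 hXnn
        _ = _ := mul_one _
    have e4 : (1/(M - 3/2)) * (5/2) * (M - 1) = (5/2) * ((M - 1)/(M - 3/2)) := by ring
    have e5 : (M - 1)/(M - 3/2) ≤ 6/5 := by
      rw [div_le_iff₀ hc]; linarith
    have e6 : (1/(M - 3/2)) * (5/2) * (M - 1) ≤ 3 := by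
      rw [e4]
      calc (5/2:ℝ) * ((M - 1)/(M - 3/2)) ≤ (5/2:ℝ) * (6/5) :=
            mul_le_mul_of_nonneg_left e5 (by norm_num)
        _ = 3 := by norm_num
    have expand : (1/M * (Real.log M + (Real.log 2 + Real.log (M - 2))) + 1/(M - 3/2) * (5/2)) * (M - 1)
        = 1/M * (Real.log M + (Real.log 2 + Real.log (M - 2))) * (M - 1)
          + 1/(M - 3/2) * (5/2) * (M - 1) := by ring
    rw [expand]
    linarith [hH', hsum2, hlog3, e3, e6]

/-- Key lemma, Case 1 (`m ≥ 3`): with `S = 1 + ∑_{i=1}^{N−1} y_i`, `m = ⌈S⌉ ≥ 3`,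
`∑_{k=1}^{N−1} y_k/((N−k)(1 + ∑_{i=1}^{k} y_i)) ≤ (4·H_{m−2} + 1)/(m − 1)`,
where `H_j` is the `j`-th harmonic number. -/
theorem key_series_bound_harmonic
    (N : ℕ) (hN : 2 ≤ N) (y : ℕ → ℝ)
    (hy0 : ∀ i, 1 ≤ i → i ≤ N - 1 → 0 ≤ y i)
    (hy1 : ∀ i, 1 ≤ i → i ≤ N - 1 → y i ≤ 1)
    (m : ℕ) (hm : m = ⌈(1 + ∑ i ∈ Icc 1 (N - 1), y i : ℝ)⌉₊) (hm3 : 3 ≤ m) :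
    ∑ k ∈ Icc 1 (N - 1),
        y k / (((N : ℝ) - (k : ℝ)) * (1 + ∑ i ∈ Icc 1 k, y i)) ≤
      (4 * ∑ l ∈ Icc 1 (m - 2), (1 : ℝ) / (l : ℝ) + 1) / ((m : ℝ) - 1) := by
  have hNcast : (N:ℝ) = ((N - 1 : ℕ) : ℝ) + 1 := by
    push_cast [Nat.cast_sub (show 1 ≤ N by omega)]
    ring
  set n := N - 1 with hn
  have hn1 : 1 ≤ n := by omega
  set M := (m:ℝ) with hMdef
  have hM3 : (3:ℝ) ≤ M := by rw [hMdef]; exact_mod_cast hm3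
  have hIoc : ∀ k : ℕ, Icc 1 k = Ioc 0 k := fun k => by
    ext i; simp only [Finset.mem_Icc, Finset.mem_Ioc]; omega
  have key0 : ∀ j k : ℕ, j ≤ k →
      (1 + ∑ i ∈ Icc 1 k, y i) = (1 + ∑ i ∈ Icc 1 j, y i) + ∑ i ∈ Ioc j k, y i := by
    intro j k hjk
    rw [hIoc k, hIoc j, ← Finset.sum_Ioc_consecutive y (Nat.zero_le j) hjk]
    ring
  have hnn : ∀ j k : ℕ, k ≤ n → 0 ≤ ∑ i ∈ Ioc j k, y i := by
    intro j k hkn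
    apply Finset.sum_nonneg
    intro i hi
    rw [Finset.mem_Ioc] at hi
    exact hy0 i (by omega) (by omega)
  have hmono : ∀ j k : ℕ, j ≤ k → k ≤ n →
      (1 + ∑ i ∈ Icc 1 j, y i) ≤ (1 + ∑ i ∈ Icc 1 k, y i) := by
    intro j k hjk hkn
    rw [key0 j k hjk]
    linarith [hnn j k hkn]
  have hbase : (1 + ∑ i ∈ Icc 1 0, y i) = 1 := by simp
  have h1le : ∀ k : ℕ, k ≤ n → 1 ≤ 1 + ∑ i ∈ Icc 1 k, y i := by
    intro k hkn
    have := hmono 0 k (Nat.zero_le k) hkn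
    rw [hbase] at this
    exact this
  have hSm : 1 + ∑ i ∈ Icc 1 n, y i ≤ M := by
    rw [hMdef, hm]
    exact Nat.le_ceil _
  have hSgt : M - 1 < 1 + ∑ i ∈ Icc 1 n, y i := by
    have h1 : m - 1 < ⌈1 + ∑ i ∈ Icc 1 n, y i⌉₊ := by rw [← hm]; omega
    have h2 : ((m-1:ℕ):ℝ) < 1 + ∑ i ∈ Icc 1 n, y i := Nat.lt_ceil.mp h1
    have h3 : ((m-1:ℕ):ℝ) = M - 1 := by
      rw [hMdef]
      push_cast [Nat.cast_sub (show 1 ≤ m by omega)]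
      ring
    linarith
  have htail : ∀ k : ℕ, k ≤ n → ∑ i ∈ Ioc k n, y i ≤ (n:ℝ) - (k:ℝ) := by
    intro k hkn
    have hb : ∑ i ∈ Ioc k n, y i ≤ (Ioc k n).card • (1:ℝ) := by
      apply Finset.sum_le_card_nsmul
      intro i hi
      rw [Finset.mem_Ioc] at hi
      exact hy1 i (by omega) (by omega)
    rw [Nat.card_Ioc] at hb
    have : ((n - k : ℕ) : ℝ) = (n:ℝ) - (k:ℝ) := by
      push_cast [Nat.cast_sub hkn]; ring
    simpa [this] using hb
  have hkey : ∀ k ∈ Icc 1 n,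
      y k / (((N : ℝ) - (k : ℝ)) * (1 + ∑ i ∈ Icc 1 k, y i)) ≤
        Gfun M (1 + ∑ i ∈ Icc 1 k, y i) - Gfun M (1 + ∑ i ∈ Icc 1 (k-1), y i) := by
    intro k hk
    rw [Finset.mem_Icc] at hk
    obtain ⟨hk1, hkn⟩ := hk
    have hab := hmono (k-1) k (by omega) hkn
    have ha1 := h1le (k-1) (by omega)
    have hbM : (1 + ∑ i ∈ Icc 1 k, y i) ≤ M :=
      le_trans (hmono k n hkn le_rfl) hSm
    have hsingle : Ioc (k-1) k = {k} := by
      ext i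
      simp only [Finset.mem_Ioc, Finset.mem_singleton]
      omega
    have hw : y k = (1 + ∑ i ∈ Icc 1 k, y i) - (1 + ∑ i ∈ Icc 1 (k-1), y i) := by
      rw [key0 (k-1) k (by omega), hsingle, Finset.sum_singleton]
      ring
    have hw1 : (1 + ∑ i ∈ Icc 1 k, y i) - (1 + ∑ i ∈ Icc 1 (k-1), y i) ≤ 1 := by
      rw [← hw]
      exact hy1 k hk1 (by omega)
    have hkr : (k:ℝ) ≤ (n:ℝ) := by exact_mod_cast hkn
    have hD1 : 1 ≤ (N:ℝ) - (k:ℝ) := by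
      rw [hNcast]
      linarith
    have hD2 : M - (1 + ∑ i ∈ Icc 1 k, y i) < (N:ℝ) - (k:ℝ) := by
      have hsplit := key0 k n hkn
      have ht := htail k hkn
      rw [hNcast]
      have : M - 1 < (1 + ∑ i ∈ Icc 1 k, y i) + ((n:ℝ) - (k:ℝ)) := by
        rw [hsplit] at hSgt
        linarith
      linarith
    exact pointwise_bound M _ _ _ _ hM3 ha1 hab hbM hw hw1 hD1 hD2
  calc ∑ k ∈ Icc 1 n, y k / (((N : ℝ) - (k : ℝ)) * (1 + ∑ i ∈ Icc 1 k, y i))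
      ≤ ∑ k ∈ Icc 1 n, (Gfun M (1 + ∑ i ∈ Icc 1 k, y i)
          - Gfun M (1 + ∑ i ∈ Icc 1 (k-1), y i)) := Finset.sum_le_sum hkey
    _ = Gfun M (1 + ∑ i ∈ Icc 1 n, y i) - Gfun M (1 + ∑ i ∈ Icc 1 0, y i) :=
        telescope_Icc (fun j => Gfun M (1 + ∑ i ∈ Icc 1 j, y i)) n
    _ ≤ (1/M) * (Real.log M + (Real.log 2 + Real.log (M - 2)))
          + (1/(M - 3/2)) * (5/2) := by
        rw [hbase]
        exact G_diff_bound M _ hM3 (h1le n le_rfl) hSm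
    _ ≤ (4 * ∑ l ∈ Icc 1 (m - 2), (1 : ℝ) / (l : ℝ) + 1) / ((m : ℝ) - 1) := by
        rw [hMdef]
        exact final_numeric m hm3
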